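/- Let w be a complex number with |w| ≥ 2. Then the set of irreducible λ-quiddities over ⟨w⟩ is exactly {(0, kw, 0, −kw) : k ∈ ℤ} ∪ {(kw, 0, −kw, 0) : k ∈ ℤ}. -/

import Mathlib

open Matrix Polynomial

noncomputable section

/-- The elementary matrix [[a, -1], [1, 0]]. -/
def matE (a : ℂ) : Matrix (Fin 2) (Fin 2) ℂ := !![a, -1; 1, 0]

/-- M_n(a_1, …, a_n) = matE a_n * matE a_{n-1} * ⋯ * matE a_1, for the list [a_1, …, a_n]. -/
def Mlist (l : List ℂ) : Matrix (Fin 2) (Fin 2) ℂ := (l.reverse.map matE).prod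

/-- A λ-quiddity over R : a nonempty tuple of elements of R with M_n(a_1,…,a_n) = ±Id. -/
def IsQuiddity (R : Set ℂ) (l : List ℂ) : Prop :=
  l ≠ [] ∧ (∀ x ∈ l, x ∈ R) ∧ (Mlist l = 1 ∨ Mlist l = -1)

/-- (a_1,…,a_n) ⊕ (b_1,…,b_m) := (a_1+b_m, a_2,…,a_{n-1}, a_n+b_1, b_2,…,b_{m-1}). -/
def oplus (a b : List ℂ) : List ℂ :=
  (a.headI + b.getLastD 0) ::
    (a.tail.dropLast ++ (a.getLastD 0 + b.headI) :: b.tail.dropLast)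

/-- b is obtained from a by a cyclic permutation of a or of the reversal of a. -/
def CyclicEquiv (a b : List ℂ) : Prop :=
  (∃ k, b = a.rotate k) ∨ (∃ k, b = a.reverse.rotate k)

/-- A λ-quiddity c over R is reducible if c ∼ (a_1,…,a_m) ⊕ (b_1,…,b_l) with
(a_1,…,a_m) a tuple of elements of R, (b_1,…,b_l) a λ-quiddity over R, m ≥ 3 and l ≥ 3. -/
def ReducibleQuiddity (R : Set ℂ) (c : List ℂ) : Prop :=
  ∃ a b : List ℂ, (∀ x ∈ a, x ∈ R) ∧ IsQuiddity R b ∧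
    3 ≤ a.length ∧ 3 ≤ b.length ∧ CyclicEquiv c (oplus a b)

/-- The irreducible λ-quiddities over R : the λ-quiddities of size ≥ 3 which are not
reducible (those of size < 3, i.e. (0,0), are by convention not irreducible). -/
def IrreducibleQuiddity (R : Set ℂ) (c : List ℂ) : Prop :=
  IsQuiddity R c ∧ 3 ≤ c.length ∧ ¬ ReducibleQuiddity R c

/-- The subgroup ⟨w⟩ = {kw : k ∈ ℤ} of (ℂ, +), as a set. -/
def subgroupGen (w : ℂ) : Set ℂ := {x | ∃ k : ℤ, x = (k : ℂ) * w}

end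

/-! ### Auxiliary lemmas -/

lemma Mlist_singleton (x : ℂ) : Mlist [x] = matE x := by simp [Mlist]

lemma Mlist_cons (x : ℂ) (l : List ℂ) : Mlist (x :: l) = Mlist l * matE x := by
  simp [Mlist]

lemma Mlist_append (l₁ l₂ : List ℂ) : Mlist (l₁ ++ l₂) = Mlist l₂ * Mlist l₁ := by
  simp [Mlist]

lemma Mlist_concat (l : List ℂ) (x : ℂ) : Mlist (l ++ [x]) = matE x * Mlist l := by
  rw [Mlist_append, Mlist_singleton]

lemma matE_zero_triple (x y : ℂ) : matE y * (matE 0 * matE x) = -matE (x + y) := by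
  simp only [matE, Matrix.mul_fin_two]
  ext i j
  fin_cases i <;> fin_cases j <;> simp <;> ring

lemma pm_comm {A B : Matrix (Fin 2) (Fin 2) ℂ} (h : A*B = 1 ∨ A*B = -1) :
    B*A = 1 ∨ B*A = -1 := by
  rcases h with h | h
  · exact Or.inl (mul_eq_one_comm.mp h)
  · right
    have h1 : A * (-B) = 1 := by rw [mul_neg, h, neg_neg]
    have := mul_eq_one_comm.mp h1
    rw [neg_mul] at this
    linear_combination (norm := abel) -this

lemma Mlist_rotate_pm {l : List ℂ} {k : ℕ} (h : Mlist l = 1 ∨ Mlist l = -1) :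
    Mlist (l.rotate k) = 1 ∨ Mlist (l.rotate k) = -1 := by
  rcases eq_or_ne l [] with rfl | hne
  · simpa using h
  · rw [← List.rotate_mod,
      List.rotate_eq_drop_append_take (le_of_lt (Nat.mod_lt _ (List.length_pos_iff.mpr hne)))]
    rw [Mlist_append]
    apply pm_comm
    rw [← Mlist_append, List.take_append_drop]
    exact h

lemma Mlist_three_eq (x y z : ℂ) :
    Mlist [x,y,z] = !![z*(y*x-1) - x, 1 - z*y; y*x - 1, -y] := by
  simp only [Mlist, List.reverse_cons, List.reverse_nil, List.nil_append, List.cons_append,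
    List.map_cons, List.map_nil, List.prod_cons, List.prod_nil, mul_one, matE,
    Matrix.mul_fin_two]
  ext i j
  fin_cases i <;> fin_cases j <;> simp <;> ring

lemma Mlist_four_eq (a b c d : ℂ) :
    Mlist [a,b,c,d] = !![(d*c-1)*(b*a-1) - d*a, -(b*(d*c-1)) + d;
                          c*(b*a-1) - a, 1 - c*b] := by
  simp only [Mlist, List.reverse_cons, List.reverse_nil, List.nil_append, List.cons_append,
    List.map_cons, List.map_nil, List.prod_cons, List.prod_nil, mul_one, matE,
    Matrix.mul_fin_two]
  ext i j
  fin_cases i <;> fin_cases j <;> simp <;> ring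

lemma Mlist_fam1 (t : ℂ) : Mlist [0, t, 0, -t] = 1 := by
  rw [Mlist_four_eq]
  ext i j
  fin_cases i <;> fin_cases j <;> simp [Matrix.one_apply]

lemma Mlist_fam2 (t : ℂ) : Mlist [t, 0, -t, 0] = 1 := by
  rw [Mlist_four_eq]
  ext i j
  fin_cases i <;> fin_cases j <;> simp [Matrix.one_apply]

lemma sg_zero (w : ℂ) : (0:ℂ) ∈ subgroupGen w := ⟨0, by simp⟩

lemma sg_neg {w x : ℂ} (h : x ∈ subgroupGen w) : -x ∈ subgroupGen w := by
  obtain ⟨k, rfl⟩ := h; exact ⟨-k, by push_cast; ring⟩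

lemma sg_add {w x y : ℂ} (hx : x ∈ subgroupGen w) (hy : y ∈ subgroupGen w) :
    x + y ∈ subgroupGen w := by
  obtain ⟨k, rfl⟩ := hx; obtain ⟨m, rfl⟩ := hy; exact ⟨k + m, by push_cast; ring⟩

lemma sg_abs {w x : ℂ} (hw : 2 ≤ ‖w‖) (hx : x ∈ subgroupGen w) (h0 : x ≠ 0) :
    2 ≤ ‖x‖ := by
  obtain ⟨k, rfl⟩ := hx
  have hk : k ≠ 0 := by rintro rfl; simp at h0
  have h1 : (1:ℝ) ≤ ‖(k : ℂ)‖ := by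
    rw [Complex.norm_intCast]
    exact_mod_cast Int.one_le_abs hk
  rw [norm_mul]
  nlinarith [norm_nonneg w]

lemma sg_ne_pm_one {w x : ℂ} (hw : 2 ≤ ‖w‖) (hx : x ∈ subgroupGen w) :
    x ≠ 1 ∧ x ≠ -1 := by
  constructor
  · rintro rfl
    have := sg_abs hw hx one_ne_zero; simp at this
  · rintro rfl
    have := sg_abs hw hx (by norm_num); simp at this

lemma no_three {w : ℂ} (hw : 2 ≤ ‖w‖) {x y z : ℂ} (hy : y ∈ subgroupGen w)
    (h : Mlist [x,y,z] = 1 ∨ Mlist [x,y,z] = -1) : False := by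
  rw [Mlist_three_eq] at h
  obtain ⟨h1, h2⟩ := sg_ne_pm_one hw hy
  rcases h with h | h
  · have hh := congrFun (congrFun h 1) 1
    simp [Matrix.one_apply] at hh
    exact h2 (by linear_combination -hh)
  · have hh := congrFun (congrFun h 1) 1
    simp [Matrix.one_apply] at hh
    exact h1 hh

lemma four_class {w : ℂ} (hw : 2 ≤ ‖w‖) {a b c d : ℂ}
    (hb : b ∈ subgroupGen w) (hc : c ∈ subgroupGen w)
    (h : Mlist [a,b,c,d] = 1 ∨ Mlist [a,b,c,d] = -1) :
    (b = 0 ∧ c = -a ∧ d = 0) ∨ (a = 0 ∧ c = 0 ∧ d = -b) := by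
  rw [Mlist_four_eq] at h
  rcases h with h | h
  · have e11 := congrFun (congrFun h 1) 1
    have e10 := congrFun (congrFun h 1) 0
    have e01 := congrFun (congrFun h 0) 1
    simp [Matrix.one_apply] at e11 e10 e01
    rcases e11 with h0 | h0
    · right
      refine ⟨?_, h0, ?_⟩
      · linear_combination -e10 + (b*a-1)*h0
      · linear_combination e01 + b*d*h0
    · left
      refine ⟨h0, ?_, ?_⟩
      · linear_combination -e10 + c*a*h0
      · linear_combination e01 + (d*c-1)*h0
  · exfalso
    have e11 := congrFun (congrFun h 1) 1
    simp [Matrix.one_apply] at e11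
    have hcb : c * b = 2 := by linear_combination -e11
    obtain ⟨k1, rfl⟩ := hc
    obtain ⟨k2, rfl⟩ := hb
    have hk1 : k1 ≠ 0 := by rintro rfl; simp at hcb
    have hk2 : k2 ≠ 0 := by rintro rfl; simp at hcb
    have habs := congrArg (‖·‖) hcb
    rw [norm_mul, norm_mul, norm_mul] at habs
    rw [Complex.norm_intCast, Complex.norm_intCast] at habs
    have h1 : (1:ℝ) ≤ |(k1:ℝ)| := by exact_mod_cast Int.one_le_abs hk1
    have h2 : (1:ℝ) ≤ |(k2:ℝ)| := by exact_mod_cast Int.one_le_abs hk2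
    have h2' : ‖(2:ℂ)‖ = 2 := by norm_num
    rw [h2'] at habs
    have A : (2:ℝ) ≤ |(k1:ℝ)| * ‖w‖ := by nlinarith [norm_nonneg w]
    have B : (2:ℝ) ≤ |(k2:ℝ)| * ‖w‖ := by nlinarith [norm_nonneg w]
    nlinarith [A, B]

lemma growth (l : List ℂ) (hne : l ≠ []) (h : ∀ x ∈ l, 2 ≤ ‖x‖) :
    1 ≤ ‖(Mlist l 1 0)‖ ∧
      ‖(Mlist l 1 0)‖ + 1 ≤ ‖(Mlist l 0 0)‖ := by
  induction l using List.reverseRecOn with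
  | nil => exact absurd rfl hne
  | append_singleton l x ih =>
    rcases eq_or_ne l [] with rfl | hl
    · simp only [List.nil_append, Mlist_singleton, matE]
      have hx : 2 ≤ ‖x‖ := h x (by simp)
      norm_num
      linarith
    · have ihh := ih hl (fun y hy => h y (by simp [hy]))
      have hx : 2 ≤ ‖x‖ := h x (by simp)
      rw [Mlist_concat]
      have e10 : (matE x * Mlist l) 1 0 = Mlist l 0 0 := by
        simp [matE, Matrix.mul_apply, Fin.sum_univ_two]
      have e00 : (matE x * Mlist l) 0 0 = x * Mlist l 0 0 - Mlist l 1 0 := by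
        simp [matE, Matrix.mul_apply, Fin.sum_univ_two]; ring
      rw [e10, e00]
      have htri : ‖(x * Mlist l 0 0)‖ ≤
          ‖(x * Mlist l 0 0 - Mlist l 1 0)‖ + ‖(Mlist l 1 0)‖ := by
        calc ‖(x * Mlist l 0 0)‖
            = ‖((x * Mlist l 0 0 - Mlist l 1 0) + Mlist l 1 0)‖ := by ring_nf
          _ ≤ _ := norm_add_le _ _
      have hmul : ‖(x * Mlist l 0 0)‖ = ‖x‖ * ‖(Mlist l 0 0)‖ :=
        norm_mul _ _
      constructor
      · linarith [ihh.1, ihh.2]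
      · nlinarith [ihh.1, ihh.2, norm_nonneg (Mlist l 0 0)]

lemma quiddity_has_zero {w : ℂ} (hw : 2 ≤ ‖w‖) {c : List ℂ}
    (hq : IsQuiddity (subgroupGen w) c) : ∃ x ∈ c, x = (0:ℂ) := by
  obtain ⟨hne, hmem, hM⟩ := hq
  by_contra hno
  push_neg at hno
  have hbig : ∀ x ∈ c, 2 ≤ ‖x‖ := fun x hx => sg_abs hw (hmem x hx) (hno x hx)
  obtain ⟨h1, h2⟩ := growth c hne hbig
  have h00 : ‖(Mlist c 0 0)‖ = 1 := by
    rcases hM with h | h <;> rw [h] <;> simp [Matrix.one_apply]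
  linarith

lemma oplus_length {a b : List ℂ} (ha : 2 ≤ a.length) (hb : 2 ≤ b.length) :
    (oplus a b).length = a.length + b.length - 2 := by
  simp [oplus]
  omega

lemma cyc_len {a b : List ℂ} (h : CyclicEquiv a b) : b.length = a.length := by
  rcases h with ⟨k, rfl⟩ | ⟨k, rfl⟩ <;> simp

lemma not_reducible_of_length_four {w : ℂ} (hw : 2 ≤ ‖w‖) {c : List ℂ}
    (hlen : c.length = 4) : ¬ ReducibleQuiddity (subgroupGen w) c := by
  rintro ⟨a, b, ha, hb, h3a, h3b, heq⟩
  have hl := cyc_len heq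
  rw [oplus_length (by omega) (by omega), hlen] at hl
  have hb3 : b.length = 3 := by omega
  obtain ⟨x, y, z, rfl⟩ := List.length_eq_three.mp hb3
  exact no_three hw (hb.2.1 y (by simp)) hb.2.2

lemma exists_five (l : List ℂ) (h : 5 ≤ l.length) :
    ∃ d0 d1 d2 d3 d4 rest, l = d0 :: d1 :: d2 :: d3 :: d4 :: rest := by
  rcases l with _ | ⟨d0, l⟩; · simp at h
  rcases l with _ | ⟨d1, l⟩; · simp at h
  rcases l with _ | ⟨d2, l⟩; · simp at h
  rcases l with _ | ⟨d3, l⟩; · simp at h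
  rcases l with _ | ⟨d4, rest⟩; · simp at h
  exact ⟨d0, d1, d2, d3, d4, rest, rfl⟩

/-- A quiddity of length ≥ 5 over ⟨w⟩ is reducible. -/
lemma reducible_of_five_le {w : ℂ} (hw : 2 ≤ ‖w‖) {c : List ℂ}
    (hq : IsQuiddity (subgroupGen w) c) (h5 : 5 ≤ c.length) :
    ReducibleQuiddity (subgroupGen w) c := by
  obtain ⟨x0, hx0c, hx00⟩ := quiddity_has_zero hw hq
  obtain ⟨j, hj, hcj⟩ := List.getElem_of_mem hx0c
  rw [hx00] at hcj
  -- choose a rotation putting the zero at index 1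
  set k : ℕ := if j = 0 then c.length - 1 else j - 1 with hk
  have hmod : (1 + k) % c.length = j := by
    rcases eq_or_ne j 0 with hj0 | hj0
    · rw [hk, if_pos hj0]
      have h1 : 1 + (c.length - 1) = c.length := by omega
      rw [h1, Nat.mod_self, hj0]
    · rw [hk, if_neg hj0]
      have h1 : 1 + (j - 1) = j := by omega
      rw [h1, Nat.mod_eq_of_lt hj]
  have h1lt : (1:ℕ) < c.length := by omega
  have hd1 : (c.rotate k)[1]? = some (0:ℂ) := by
    rw [List.getElem?_rotate h1lt, hmod, List.getElem?_eq_getElem hj, hcj]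
  have hdq : Mlist (c.rotate k) = 1 ∨ Mlist (c.rotate k) = -1 := Mlist_rotate_pm hq.2.2
  have hdmem : ∀ x ∈ c.rotate k, x ∈ subgroupGen w := fun x hx =>
    hq.2.1 x ((List.mem_rotate).mp hx)
  obtain ⟨d0, d1, d2, d3, d4, rest, hdd⟩ := exists_five (c.rotate k) (by simpa using h5)
  rw [hdd] at hd1 hdq hdmem
  have hd10 : d1 = 0 := by simpa using hd1
  subst hd10
  -- the decomposition
  refine ⟨[-d2, 0, d2, 0], (d3 :: d4 :: rest) ++ [d0 + d2], ?_, ?_, by simp, by simp, ?_⟩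
  · intro x hx
    simp only [List.mem_cons, List.mem_singleton] at hx
    have hd2 : d2 ∈ subgroupGen w := hdmem d2 (by simp)
    rcases hx with rfl | rfl | rfl | hx
    · exact sg_neg hd2
    · exact sg_zero w
    · exact hd2
    · simp at hx; rw [hx]; exact sg_zero w
  · refine ⟨by simp, ?_, ?_⟩
    · intro x hx
      rcases List.mem_append.mp hx with h | h
      · have hx3 : x = d3 ∨ x = d4 ∨ x ∈ rest := by simpa using h
        rcases hx3 with h' | h' | h'
        · rw [h']; exact hdmem d3 (by simp)
        · rw [h']; exact hdmem d4 (by simp)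
        · exact hdmem x (by simp [h'])
      · have hx3 : x = d0 + d2 := by simpa using h
        rw [hx3]
        exact sg_add (hdmem d0 (by simp)) (hdmem d2 (by simp))
    · -- Mlist of b is ±1
      have hsplit : Mlist (d0 :: 0 :: d2 :: d3 :: d4 :: rest)
          = Mlist (d3 :: d4 :: rest) * (matE d2 * (matE 0 * matE d0)) := by
        rw [Mlist_cons, Mlist_cons, Mlist_cons, mul_assoc, mul_assoc]
      rw [hsplit, matE_zero_triple, mul_neg] at hdq
      have hq' : Mlist (d3 :: d4 :: rest) * matE (d0 + d2) = 1 ∨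
          Mlist (d3 :: d4 :: rest) * matE (d0 + d2) = -1 := by
        rcases hdq with h | h
        · right; linear_combination (norm := abel) -h
        · left; linear_combination (norm := abel) -h
      rw [Mlist_concat]
      exact pm_comm hq'
  · left
    refine ⟨k, ?_⟩
    rw [hdd]
    have h2 : ((d3 :: d4 :: rest) ++ [d0 + d2]).tail.dropLast = d4 :: rest := by
      simp only [List.cons_append, List.tail_cons]
      rw [← List.cons_append, List.dropLast_concat]
    have h1 : ((d3 :: d4 :: rest) ++ [d0 + d2]).getLastD 0 = d0 + d2 := by
      rw [List.getLastD_eq_getLast?, List.getLast?_concat]; rfl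
    unfold oplus
    rw [h1, h2]
    simp

lemma exists_four (l : List ℂ) (h : l.length = 4) :
    ∃ a b x y, l = [a, b, x, y] := by
  rcases l with _ | ⟨a, l⟩; · simp at h
  rcases l with _ | ⟨b, l⟩; · simp at h
  rcases l with _ | ⟨x, l⟩; · simp at h
  rcases l with _ | ⟨y, l⟩; · simp at h
  rcases l with _ | ⟨z, l⟩
  · exact ⟨a, b, x, y, rfl⟩
  · simp at h

theorem stmt17 (w : ℂ) (hw : 2 ≤ ‖w‖) :
    {c : List ℂ | IrreducibleQuiddity (subgroupGen w) c} =
      {c : List ℂ | ∃ k : ℤ, c = [0, (k : ℂ) * w, 0, -((k : ℂ) * w)]} ∪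
      {c : List ℂ | ∃ k : ℤ, c = [(k : ℂ) * w, 0, -((k : ℂ) * w), 0]} := by
  ext c
  simp only [Set.mem_setOf_eq, Set.mem_union]
  constructor
  · rintro ⟨⟨hne, hmem, hM⟩, hlen3, hirr⟩
    rcases Nat.lt_or_ge c.length 5 with h5 | h5
    · rcases eq_or_ne c.length 3 with h3 | h3
      · obtain ⟨x, y, z, rfl⟩ := List.length_eq_three.mp h3
        exact (no_three hw (hmem y (by simp)) hM).elim
      · have h4 : c.length = 4 := by omega
        obtain ⟨a, b, x, y, rfl⟩ := exists_four c h4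
        rcases four_class hw (hmem b (by simp)) (hmem x (by simp)) hM with
          ⟨hb, hx, hy⟩ | ⟨ha, hx, hy⟩
        · right
          obtain ⟨k, hk⟩ := hmem a (by simp)
          exact ⟨k, by rw [hb, hx, hy, hk]⟩
        · left
          obtain ⟨k, hk⟩ := hmem b (by simp)
          exact ⟨k, by rw [ha, hx, hy, hk]⟩
    · exact absurd (reducible_of_five_le hw ⟨hne, hmem, hM⟩ h5) hirr
  · rintro (⟨k, rfl⟩ | ⟨k, rfl⟩)
    · refine ⟨⟨by simp, ?_, Or.inl (Mlist_fam1 _)⟩, by simp,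
        not_reducible_of_length_four hw (by simp)⟩
      intro x hx
      simp only [List.mem_cons, List.mem_singleton, List.not_mem_nil, or_false] at hx
      rcases hx with rfl | rfl | rfl | rfl
      · exact sg_zero w
      · exact ⟨k, rfl⟩
      · exact sg_zero w
      · exact sg_neg ⟨k, rfl⟩
    · refine ⟨⟨by simp, ?_, Or.inl (Mlist_fam2 _)⟩, by simp,
        not_reducible_of_length_four hw (by simp)⟩
      intro x hx
      simp only [List.mem_cons, List.mem_singleton, List.not_mem_nil, or_false] at hx
      rcases hx with rfl | rfl | rfl | rfl
      · exact ⟨k, rfl⟩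
      · exact sg_zero w
      · exact sg_neg ⟨k, rfl⟩
      · exact sg_zero w
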